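/- (Helstrom bound) Let ρ₀ and ρ₁ be density matrices on a finite-dimensional Hilbert space, given with prior probabilities η₀ and η₁ = 1 − η₀. For any POVM {E₀, E₁} (E₀, E₁ ≥ 0, E₀ + E₁ = 1), the success probability η₀ tr(E₀ ρ₀) + η₁ tr(E₁ ρ₁) of guessing the state is at most (1/2)(1 + tr|η₀ρ₀ − η₁ρ₁|), and there exists a POVM achieving this bound (the projectors onto the positive and negative parts of η₀ρ₀ − η₁ρ₁). -/

import Mathlib

open Matrix Finset
open scoped ComplexOrder

/-- `tr|A|` for a Hermitian matrix `A`: the sum of the absolute values of its eigenvalues. -/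
noncomputable def traceAbs {n : Type*} [Fintype n] [DecidableEq n]
    {A : Matrix n n ℂ} (hA : A.IsHermitian) : ℝ :=
  ∑ i, |hA.eigenvalues i|

lemma diag_re_nonneg {n : Type*} [Fintype n] [DecidableEq n] {M : Matrix n n ℂ}
    (hM : M.PosSemidef) (i : n) : 0 ≤ (M i i).re := by
  have := hM.diag_nonneg (i := i)
  rw [Complex.le_def] at this
  simp at this
  exact this.1

-- key lemma: trace bound
lemma key {n : Type*} [Fintype n] [DecidableEq n] {Δ : Matrix n n ℂ} (hΔ : Δ.IsHermitian)
    {E : Matrix n n ℂ} (hE : E.PosSemidef) (hE1 : (1 - E).PosSemidef) :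
    ((E * Δ).trace).re ≤ ∑ i, max (hΔ.eigenvalues i) 0 := by
  set V : Matrix n n ℂ := (hΔ.eigenvectorUnitary : Matrix n n ℂ)
  have hVV : (star V) * V = 1 := (Matrix.mem_unitaryGroup_iff').mp hΔ.eigenvectorUnitary.2
  set M : Matrix n n ℂ := (star V) * E * V with hMdef
  have hMps : M.PosSemidef := by
    have := hE.conjTranspose_mul_mul_same V
    simpa [hMdef, star_eq_conjTranspose] using this
  have hM1 : (1 - M).PosSemidef := by
    have := hE1.conjTranspose_mul_mul_same V
    have h1 : Vᴴ * (1 - E) * V = 1 - M := by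
      show Vᴴ * (1 - E) * V = 1 - M
      rw [Matrix.mul_sub, Matrix.mul_one, Matrix.sub_mul]
      show star V * V - star V * E * V = 1 - M
      rw [hVV, hMdef]
    rwa [h1] at this
  have htr : (E * Δ).trace = (M * diagonal (RCLike.ofReal ∘ hΔ.eigenvalues)).trace := by
    conv_lhs => rw [hΔ.spectral_theorem, Unitary.conjStarAlgAut_apply]
    rw [← Matrix.mul_assoc, ← Matrix.mul_assoc, Matrix.trace_mul_cycle (E * V)]
    rw [← Matrix.mul_assoc, hMdef]
  rw [htr, Matrix.trace]
  have hdiag : ∀ i, (M * diagonal (RCLike.ofReal ∘ hΔ.eigenvalues)).diag i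
      = M i i * (hΔ.eigenvalues i : ℂ) := by
    intro i; simp [Matrix.diag, Matrix.mul_diagonal]
  rw [Complex.re_sum]
  apply Finset.sum_le_sum
  intro i _
  rw [hdiag i]
  have h0 : 0 ≤ (M i i).re := diag_re_nonneg hMps i
  have h1 : (M i i).re ≤ 1 := by
    have := diag_re_nonneg hM1 i
    simp [Matrix.sub_apply, Matrix.one_apply] at this
    linarith
  have : (M i i * (hΔ.eigenvalues i : ℂ)).re = (M i i).re * hΔ.eigenvalues i := by
    simp [Complex.mul_re]
  rw [this]
  rcases le_or_gt 0 (hΔ.eigenvalues i) with h | h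
  · calc (M i i).re * hΔ.eigenvalues i ≤ 1 * hΔ.eigenvalues i := by nlinarith
      _ ≤ max (hΔ.eigenvalues i) 0 := by rw [one_mul]; exact le_max_left _ _
  · calc (M i i).re * hΔ.eigenvalues i ≤ 0 := by nlinarith
      _ ≤ max (hΔ.eigenvalues i) 0 := le_max_right _ _

lemma trace_eq_sum_eig {n : Type*} [Fintype n] [DecidableEq n] {Δ : Matrix n n ℂ}
    (hΔ : Δ.IsHermitian) : Δ.trace = ∑ i, (hΔ.eigenvalues i : ℂ) := by
  conv_lhs => rw [hΔ.spectral_theorem, Unitary.conjStarAlgAut_apply]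
  rw [Matrix.trace_mul_cycle]
  rw [(Matrix.mem_unitaryGroup_iff').mp hΔ.eigenvectorUnitary.2, Matrix.one_mul,
    Matrix.trace_diagonal]
  rfl

lemma key_eq {n : Type*} [Fintype n] [DecidableEq n] {Δ : Matrix n n ℂ} (hΔ : Δ.IsHermitian) :
    ∃ E : Matrix n n ℂ, E.PosSemidef ∧ (1 - E).PosSemidef ∧
      ((E * Δ).trace).re = ∑ i, max (hΔ.eigenvalues i) 0 := by
  set V : Matrix n n ℂ := (hΔ.eigenvectorUnitary : Matrix n n ℂ) with hVdef
  have hVV : (star V) * V = 1 := (Matrix.mem_unitaryGroup_iff').mp hΔ.eigenvectorUnitary.2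
  have hVV' : V * (star V) = 1 := (Matrix.mem_unitaryGroup_iff).mp hΔ.eigenvectorUnitary.2
  have cancel : ∀ X : Matrix n n ℂ, star V * (V * X) = X := fun X => by
    rw [← Matrix.mul_assoc, hVV, Matrix.one_mul]
  set p : n → ℂ := fun i => if 0 < hΔ.eigenvalues i then 1 else 0 with hp
  refine ⟨V * diagonal p * (star V), ?_, ?_, ?_⟩
  · refine Matrix.PosSemidef.mul_mul_conjTranspose_same ?_ V
    refine Matrix.posSemidef_diagonal_iff.mpr fun i => ?_
    rw [hp]; dsimp only; split <;> norm_num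
  · have h1 : (1 : Matrix n n ℂ) - V * diagonal p * (star V)
        = V * diagonal (fun i => 1 - p i) * (star V) := by
      have hd : (diagonal fun i => 1 - p i) = 1 - diagonal p := by
        ext i j; by_cases h : i = j <;> simp [diagonal, h, Matrix.one_apply]
      rw [hd, Matrix.mul_sub, Matrix.mul_one, Matrix.sub_mul, hVV']
    rw [h1]
    refine Matrix.PosSemidef.mul_mul_conjTranspose_same ?_ V
    refine Matrix.posSemidef_diagonal_iff.mpr fun i => ?_
    simp only [hp]; split <;> norm_num
  · have hprod : V * diagonal p * (star V) * Δ
        = V * (diagonal p * diagonal (RCLike.ofReal ∘ hΔ.eigenvalues)) * (star V) := by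
      conv_lhs => rw [hΔ.spectral_theorem, Unitary.conjStarAlgAut_apply]
      rw [← hVdef]
      simp only [Matrix.mul_assoc]
      rw [cancel]
    rw [hprod, Matrix.trace_mul_cycle, ← Matrix.mul_assoc, hVV, Matrix.one_mul,
      Matrix.diagonal_mul_diagonal, Matrix.trace_diagonal]
    rw [Complex.re_sum]
    apply Finset.sum_congr rfl
    intro i _
    simp only [hp]
    split <;> rename_i h
    · simp [max_eq_left h.le]
    · simp [max_eq_right (not_lt.mp h)]

/-- The Helstrom bound: for density matrices `ρ₀, ρ₁` with priors `η₀, η₁ = 1 − η₀`,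
every two-outcome POVM `{E₀, E₁}` has success probability at most
`(1/2)(1 + tr|η₀ρ₀ − η₁ρ₁|)`, and some POVM attains this bound. -/
theorem helstrom_bound {n : Type*} [Fintype n] [DecidableEq n]
    (ρ₀ ρ₁ : Matrix n n ℂ) (h₀ : ρ₀.PosSemidef) (h₁ : ρ₁.PosSemidef)
    (ht₀ : ρ₀.trace = 1) (ht₁ : ρ₁.trace = 1)
    (η₀ η₁ : ℝ) (hη₀ : 0 ≤ η₀) (hη₀1 : η₀ ≤ 1) (hη₁ : η₁ = 1 - η₀)
    (hherm : ((η₀ : ℂ) • ρ₀ - (η₁ : ℂ) • ρ₁).IsHermitian) :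
    (∀ E₀ E₁ : Matrix n n ℂ, E₀.PosSemidef → E₁.PosSemidef → E₀ + E₁ = 1 →
      η₀ * ((E₀ * ρ₀).trace).re + η₁ * ((E₁ * ρ₁).trace).re
        ≤ (1 / 2) * (1 + traceAbs hherm)) ∧
    (∃ E₀ E₁ : Matrix n n ℂ, E₀.PosSemidef ∧ E₁.PosSemidef ∧ E₀ + E₁ = 1 ∧
      η₀ * ((E₀ * ρ₀).trace).re + η₁ * ((E₁ * ρ₁).trace).re
        = (1 / 2) * (1 + traceAbs hherm)) := by
  have hsucc : ∀ E₀ : Matrix n n ℂ,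
      η₀ * ((E₀ * ρ₀).trace).re + η₁ * (((1 - E₀) * ρ₁).trace).re
        = η₁ + ((E₀ * ((η₀ : ℂ) • ρ₀ - (η₁ : ℂ) • ρ₁)).trace).re := by
    intro E₀
    have h1 : E₀ * ((η₀ : ℂ) • ρ₀ - (η₁ : ℂ) • ρ₁)
        = (η₀ : ℂ) • (E₀ * ρ₀) - (η₁ : ℂ) • (E₀ * ρ₁) := by
      rw [Matrix.mul_sub, Matrix.mul_smul, Matrix.mul_smul]
    have h2 : (1 - E₀) * ρ₁ = ρ₁ - E₀ * ρ₁ := by rw [Matrix.sub_mul, Matrix.one_mul]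
    rw [h1, h2, Matrix.trace_sub, Matrix.trace_sub, Matrix.trace_smul, Matrix.trace_smul, ht₁]
    simp only [smul_eq_mul, Complex.sub_re, Complex.mul_re, Complex.ofReal_re,
      Complex.ofReal_im, Complex.one_re]
    ring
  have hsumeig : ∑ i, hherm.eigenvalues i = η₀ - η₁ := by
    have h := trace_eq_sum_eig hherm
    rw [Matrix.trace_sub, Matrix.trace_smul, Matrix.trace_smul, ht₀, ht₁] at h
    have := congrArg Complex.re h
    simpa [Complex.re_sum] using this.symm
  have hmax : ∑ i, max (hherm.eigenvalues i) 0
      = (traceAbs hherm + (η₀ - η₁)) / 2 := by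
    rw [traceAbs, ← hsumeig, ← Finset.sum_add_distrib, Finset.sum_div]
    apply Finset.sum_congr rfl
    intro i _
    rcases le_or_gt 0 (hherm.eigenvalues i) with h | h
    · rw [max_eq_left h, abs_of_nonneg h]; ring
    · rw [max_eq_right h.le, abs_of_neg h]; ring
  have hRHS : (1 / 2) * (1 + traceAbs hherm)
      = η₁ + (traceAbs hherm + (η₀ - η₁)) / 2 := by linarith [hη₁]
  constructor
  · intro E₀ E₁ hE₀ hE₁ hadd
    have hE₁' : E₁ = 1 - E₀ := by rw [← hadd]; abel
    subst hE₁'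
    rw [hsucc E₀, hRHS, ← hmax]
    linarith [key hherm hE₀ hE₁]
  · obtain ⟨E, hE, hE1, htr⟩ := key_eq hherm
    exact ⟨E, 1 - E, hE, hE1, by abel, by rw [hsucc E, hRHS, ← hmax, htr]⟩
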